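/- For every orientation G⃗ of a generalized corona P_n ⊙ pK_1 (n ≥ 1, p ≥ 1), 2 ≤ χρ(G⃗) ≤ 3; moreover χρ(G⃗) = 2 if and only if one part of the bipartition of P_n ⊙ pK_1 contains only sources or sinks in G⃗. -/

import Mathlib

open SimpleGraph

/-- A packing `k`-coloring of a graph: colors in `{1,…,k}`, and distinct vertices
with the same color `i` are at distance greater than `i`. -/
def IsPackingColoring {V : Type*} (G : SimpleGraph V) (k : ℕ) (c : V → ℕ) : Prop :=
  (∀ v, 1 ≤ c v ∧ c v ≤ k) ∧
  ∀ u v : V, u ≠ v → c u = c v → (c u : ℕ∞) < G.edist u v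

/-- The packing chromatic number. -/
noncomputable def packingChromaticNumber {V : Type*} (G : SimpleGraph V) : ℕ :=
  sInf {k | ∃ c, IsPackingColoring G k c}

/-- The generalized corona `G ⊙ pK₁`: add `p` pendant neighbors to each vertex. -/
def genCorona {V : Type*} (G : SimpleGraph V) (p : ℕ) : SimpleGraph (V ⊕ V × Fin p) where
  Adj x y :=
    (∃ u v, x = Sum.inl u ∧ y = Sum.inl v ∧ G.Adj u v) ∨
    (∃ u j, x = Sum.inl u ∧ y = Sum.inr (u, j)) ∨
    (∃ u j, x = Sum.inr (u, j) ∧ y = Sum.inl u)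
  symm := by
    refine ⟨?_⟩
    rintro x y (⟨u, v, rfl, rfl, h⟩ | ⟨u, j, rfl, rfl⟩ | ⟨u, j, rfl, rfl⟩)
    · exact Or.inl ⟨v, u, rfl, rfl, h.symm⟩
    · exact Or.inr (Or.inr ⟨u, j, rfl, rfl⟩)
    · exact Or.inr (Or.inl ⟨u, j, rfl, rfl⟩)
  loopless := by
    refine ⟨?_⟩
    rintro x (⟨u, v, rfl, h1, h⟩ | ⟨u, j, rfl, h1⟩ | ⟨u, j, rfl, h1⟩)
    · cases h1; exact G.loopless.irrefl u h
    · exact absurd h1 (by simp)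
    · exact absurd h1 (by simp)

/-- `A` is an orientation of `G`: each edge gets exactly one direction. -/
def IsOrientation {V : Type*} (G : SimpleGraph V) (A : V → V → Prop) : Prop :=
  (∀ u v, A u v → ¬ A v u) ∧ (∀ u v, G.Adj u v ↔ (A u v ∨ A v u))

/-- Existence of a directed path of length `n` from `u` to `v`. -/
def DPath {V : Type*} (A : V → V → Prop) : ℕ → V → V → Prop
  | 0, u, v => u = v
  | (n+1), u, v => ∃ w, A u w ∧ DPath A n w v

/-- The weak directed distance: length of a shortest directed path joining `u` and `v`
in either direction. -/
noncomputable def wdist {V : Type*} (A : V → V → Prop) (u v : V) : ℕ∞ :=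
  sInf {m : ℕ∞ | ∃ n : ℕ, m = n ∧ (DPath A n u v ∨ DPath A n v u)}

/-- A packing `k`-coloring of a digraph, w.r.t. the weak directed distance. -/
def IsDPackingColoring {V : Type*} (A : V → V → Prop) (k : ℕ) (c : V → ℕ) : Prop :=
  (∀ v, 1 ≤ c v ∧ c v ≤ k) ∧
  ∀ u v : V, u ≠ v → c u = c v → (c u : ℕ∞) < wdist A u v

/-- The packing chromatic number of a digraph. -/
noncomputable def dPackingChromaticNumber {V : Type*} (A : V → V → Prop) : ℕ :=
  sInf {k | ∃ c, IsDPackingColoring A k c}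

/-- A source: no incoming arcs. -/
def IsSource {V : Type*} (A : V → V → Prop) (v : V) : Prop := ∀ u, ¬ A u v

/-- A sink: no outgoing arcs. -/
def IsSink {V : Type*} (A : V → V → Prop) (v : V) : Prop := ∀ u, ¬ A v u


open SimpleGraph

-- [the pinned declarations from proof.lean go here when assembling]

namespace DPackAux

variable {V : Type*}

lemma wdist_le' (A : V → V → Prop) {u v : V} {m : ℕ}
    (h : DPath A m u v ∨ DPath A m v u) : wdist A u v ≤ (m : ℕ∞) :=
  sInf_le ⟨m, rfl, h⟩

lemma lt_wdist' (A : V → V → Prop) {u v : V} {k : ℕ}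
    (h : ∀ m : ℕ, m ≤ k → ¬(DPath A m u v ∨ DPath A m v u)) :
    (k : ℕ∞) < wdist A u v := by
  have h1 : ((k+1 : ℕ) : ℕ∞) ≤ wdist A u v := by
    apply le_sInf
    rintro b ⟨m, rfl, hm⟩
    have hle : k + 1 ≤ m := by
      by_contra hc
      exact h m (by omega) hm
    exact_mod_cast hle
  refine lt_of_lt_of_le ?_ h1
  exact_mod_cast Nat.lt_succ_self k

lemma dpath1' (A : V → V → Prop) {u v : V} : DPath A 1 u v ↔ A u v :=
  ⟨fun ⟨_, h, e⟩ => e ▸ h, fun h => ⟨v, h, rfl⟩⟩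

lemma dpath2' (A : V → V → Prop) {u v : V} : DPath A 2 u v ↔ ∃ w, A u w ∧ A w v := by
  constructor
  · rintro ⟨w, hw, x, hx, rfl⟩
    exact ⟨w, hw, hx⟩
  · rintro ⟨w, hw, hx⟩
    exact ⟨w, hw, v, hx, rfl⟩

lemma dpath3' (A : V → V → Prop) {u v : V} :
    DPath A 3 u v ↔ ∃ w x, A u w ∧ A w x ∧ A x v := by
  constructor
  · rintro ⟨w, hw, x, hx, y, hy, rfl⟩
    exact ⟨w, x, hw, hx, hy⟩
  · rintro ⟨w, x, hw, hx, hy⟩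
    exact ⟨w, hw, x, hx, v, hy, rfl⟩

end DPackAux
namespace DPackAux

section Corona

variable {n p : ℕ}

abbrev Vc (n p : ℕ) := Fin n ⊕ Fin n × Fin p

/-- The bipartition part. -/
def corPart : Vc n p → Prop
  | Sum.inl i => Even i.1
  | Sum.inr (i, _) => ¬ Even i.1

def isActiveV (A : Vc n p → Vc n p → Prop) (i : Fin n) : Prop :=
  (∃ u, A u (Sum.inl i)) ∧ (∃ u, A (Sum.inl i) u)

def Barc (A : Vc n p → Vc n p → Prop) (k l : ℕ) : Prop :=
  ∃ (hk : k < n) (hl : l < n), A (Sum.inl ⟨k, hk⟩) (Sum.inl ⟨l, hl⟩)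

def actN (A : Vc n p → Vc n p → Prop) (k : ℕ) : Prop :=
  ∃ hk : k < n, isActiveV A ⟨k, hk⟩

open Classical in
noncomputable def Fcol (A : Vc n p → Vc n p → Prop) : ℕ → ℕ
  | 0 => 2
  | (k+1) =>
      if Even (k+1) then (if Barc A k (k+1) then Fcol A k else 5 - Fcol A k)
      else if actN A k then (if Barc A (k+1) k then Fcol A k else 5 - Fcol A k) else 2

open Classical in
noncomputable def ccol (A : Vc n p → Vc n p → Prop) : Vc n p → ℕ
  | Sum.inl i => if Even i.1 then 1 else Fcol A i.1
  | Sum.inr (i, q) =>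
      if Even i.1 then
        (if isActiveV A i then
          (if A (Sum.inr (i, q)) (Sum.inl i) then Fcol A i.1 else 5 - Fcol A i.1)
        else 2)
      else 1

lemma Fcol_two_or_three (A : Vc n p → Vc n p → Prop) (k : ℕ) :
    Fcol A k = 2 ∨ Fcol A k = 3 := by
  induction k with
  | zero => exact Or.inl rfl
  | succ k ih =>
    rw [Fcol]
    rcases ih with h | h <;> split_ifs <;> omega

lemma adj_inl {u : Vc n p} {i : Fin n} (h : (genCorona (pathGraph n) p).Adj u (Sum.inl i)) :
    (∃ a : Fin n, u = Sum.inl a ∧ (a.1 + 1 = i.1 ∨ i.1 + 1 = a.1)) ∨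
      (∃ q, u = Sum.inr (i, q)) := by
  rcases h with ⟨a, b, rfl, hb, hab⟩ | ⟨a, j, rfl, hb⟩ | ⟨a, j, rfl, hb⟩
  · injection hb with hb
    subst hb
    exact Or.inl ⟨a, rfl, pathGraph_adj.mp hab⟩
  · simp at hb
  · injection hb with hb
    subst hb
    exact Or.inr ⟨j, rfl⟩

lemma adj_inr {u : Vc n p} {i : Fin n} {q : Fin p}
    (h : (genCorona (pathGraph n) p).Adj u (Sum.inr (i, q))) : u = Sum.inl i := by
  rcases h with ⟨a, b, rfl, hb, hab⟩ | ⟨a, j, rfl, hb⟩ | ⟨a, j, rfl, hb⟩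
  · simp at hb
  · injection hb with hb
    obtain ⟨rfl, rfl⟩ := Prod.mk.injEq .. ▸ hb
    rfl
  · simp at hb

lemma adj_cross {u v : Vc n p} (h : (genCorona (pathGraph n) p).Adj u v) :
    (corPart u ↔ ¬ corPart v) := by
  rcases h with ⟨a, b, rfl, rfl, hab⟩ | ⟨a, j, rfl, rfl⟩ | ⟨a, j, rfl, rfl⟩
  · rw [pathGraph_adj] at hab
    simp only [corPart, Nat.even_iff] at *
    omega
  · simp [corPart]
  · simp [corPart]

variable {A : Vc n p → Vc n p → Prop}

lemma arc_cross (hA : IsOrientation (genCorona (pathGraph n) p) A) {u v : Vc n p}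
    (h : A u v) : (corPart u ↔ ¬ corPart v) :=
  adj_cross ((hA.2 u v).mpr (Or.inl h))

lemma ccol_one_iff (A : Vc n p → Vc n p → Prop) (v : Vc n p) :
    ccol A v = 1 ↔ corPart v := by
  cases v with
  | inl i =>
    simp only [ccol, corPart]
    rcases Fcol_two_or_three A i.1 with h2 | h2 <;> split_ifs with h <;> simp [h] <;> omega
  | inr x =>
    obtain ⟨i, q⟩ := x
    simp only [ccol, corPart]
    rcases Fcol_two_or_three A i.1 with h2 | h2 <;> split_ifs with h <;> simp [h] <;> omega

lemma key (hA : IsOrientation (genCorona (pathGraph n) p) A) (i : Fin n) (hi : Even i.1)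
    (hact : isActiveV A i) (u : Vc n p)
    (hadj : (genCorona (pathGraph n) p).Adj u (Sum.inl i)) :
    (A u (Sum.inl i) → ccol A u = Fcol A i.1) ∧
    (A (Sum.inl i) u → ccol A u = 5 - Fcol A i.1) := by
  classical
  rcases adj_inl hadj with ⟨a, rfl, hcase⟩ | ⟨q, rfl⟩
  · have hodd : ¬ Even a.1 := by
      rcases hcase with h | h <;> (simp only [Nat.even_iff] at hi ⊢; omega)
    have hcu : ccol A (Sum.inl a) = Fcol A a.1 := by simp [ccol, hodd]
    rcases hcase with h | h
    · -- a.1 + 1 = i.1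
      have hB : Barc A a.1 i.1 ↔ A (Sum.inl a) (Sum.inl i) := by
        constructor
        · rintro ⟨hk, hl, hx⟩
          have e1 : (⟨a.1, hk⟩ : Fin n) = a := rfl
          have e2 : (⟨i.1, hl⟩ : Fin n) = i := rfl
          rwa [e1, e2] at hx
        · intro hx
          exact ⟨a.2, i.2, hx⟩
      have hunf : Fcol A i.1 = if Barc A a.1 i.1 then Fcol A a.1 else 5 - Fcol A a.1 := by
        conv_lhs => rw [← h]
        rw [Fcol, if_pos (show Even (a.1 + 1) by rw [h]; exact hi), h]
      constructor
      · intro hx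
        rw [hunf, if_pos (hB.mpr hx), hcu]
      · intro hx
        have hnx : ¬ Barc A a.1 i.1 := fun hb => hA.1 _ _ hx (hB.mp hb)
        rw [hcu, hunf, if_neg hnx]
        rcases Fcol_two_or_three A a.1 with h2 | h2 <;> omega
    · -- i.1 + 1 = a.1
      have h1n : i.1 + 1 < n := by rw [h]; exact a.2
      have hB : Barc A a.1 i.1 ↔ A (Sum.inl a) (Sum.inl i) := by
        constructor
        · rintro ⟨hk, hl, hx⟩
          have e1 : (⟨a.1, hk⟩ : Fin n) = a := rfl
          have e2 : (⟨i.1, hl⟩ : Fin n) = i := rfl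
          rwa [e1, e2] at hx
        · intro hx
          exact ⟨a.2, i.2, hx⟩
      have hoddsucc : ¬ Even (i.1 + 1) := by
        simp only [Nat.even_iff] at hi ⊢; omega
      have hactn : actN A i.1 := ⟨i.2, hact⟩
      have hunf : Fcol A a.1 =
          if Barc A a.1 i.1 then Fcol A i.1 else 5 - Fcol A i.1 := by
        conv_lhs => rw [← h]
        rw [Fcol, if_neg hoddsucc, if_pos hactn, h]
      constructor
      · intro hx
        rw [hcu, hunf, if_pos (hB.mpr hx)]
      · intro hx
        have hnx : ¬ Barc A a.1 i.1 := fun hb => hA.1 _ _ hx (hB.mp hb)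
        rw [hcu, hunf, if_neg hnx]
  · -- pendant
    have hcc : ccol A (Sum.inr (i, q)) =
        if A (Sum.inr (i, q)) (Sum.inl i) then Fcol A i.1 else 5 - Fcol A i.1 := by
      simp only [ccol, if_pos hi, if_pos hact]
    constructor
    · intro hx
      rw [hcc, if_pos hx]
    · intro hx
      rw [hcc, if_neg (hA.1 _ _ hx)]

lemma no2path (hA : IsOrientation (genCorona (pathGraph n) p) A) {u v w : Vc n p}
    (huv : u ≠ v) (hu : ccol A u ≠ 1) (h1 : A u w) (h2 : A w v) :
    ccol A u ≠ ccol A v := by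
  have hpu : ¬ corPart u := fun h => hu ((ccol_one_iff A u).mpr h)
  have hpw : corPart w := by
    have := arc_cross hA h1
    tauto
  cases w with
  | inr x =>
    obtain ⟨j, q⟩ := x
    have e1 : u = Sum.inl j := adj_inr ((hA.2 u _).mpr (Or.inl h1))
    have e2 : v = Sum.inl j := adj_inr (((hA.2 _ v).mpr (Or.inl h2)).symm)
    exact absurd (e1.trans e2.symm) huv
  | inl i =>
    have hi : Even i.1 := hpw
    have hact : isActiveV A i := ⟨⟨u, h1⟩, ⟨v, h2⟩⟩
    have k1 := (key hA i hi hact u ((hA.2 u _).mpr (Or.inl h1))).1 h1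
    have k2 := (key hA i hi hact v (((hA.2 _ v).mpr (Or.inl h2)).symm)).2 h2
    rw [k1, k2]
    rcases Fcol_two_or_three A i.1 with h | h <;> omega

lemma ccol_packing (hA : IsOrientation (genCorona (pathGraph n) p) A) :
    IsDPackingColoring A 3 (ccol A) := by
  constructor
  · intro v
    cases v with
    | inl i =>
      simp only [ccol]
      rcases Fcol_two_or_three A i.1 with h2 | h2 <;> split_ifs <;> omega
    | inr x =>
      obtain ⟨i, q⟩ := x
      simp only [ccol]
      rcases Fcol_two_or_three A i.1 with h2 | h2 <;> split_ifs <;> omega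
  · intro u v huv hc
    by_cases h1 : ccol A u = 1
    · rw [h1]
      have hpu : corPart u := (ccol_one_iff A u).mp h1
      have hpv : corPart v := (ccol_one_iff A v).mp (hc ▸ h1)
      apply lt_wdist' A
      intro m hm hd
      interval_cases m
      · rcases hd with hd | hd
        · exact huv hd
        · exact huv hd.symm
      · rcases hd with hd | hd
        · exact (arc_cross hA ((dpath1' A).mp hd)).mp hpu hpv
        · exact (arc_cross hA ((dpath1' A).mp hd)).mp hpv hpu
    · have hv1 : ccol A v ≠ 1 := fun h => h1 (hc ▸ h)
      have hpu : ¬ corPart u := fun h => h1 ((ccol_one_iff A u).mpr h)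
      have hpv : ¬ corPart v := fun h => hv1 ((ccol_one_iff A v).mpr h)
      have hb3 : ccol A u ≤ 3 := by
        clear hc h1 hv1 hpu hpv huv
        cases u with
        | inl i =>
          simp only [ccol]
          rcases Fcol_two_or_three A i.1 with h2 | h2 <;> split_ifs <;> omega
        | inr x =>
          obtain ⟨i, q⟩ := x
          simp only [ccol]
          rcases Fcol_two_or_three A i.1 with h2 | h2 <;> split_ifs <;> omega
      apply lt_wdist' A
      intro m hm hd
      have hm3 : m ≤ 3 := le_trans hm hb3
      interval_cases m
      · rcases hd with hd | hd
        · exact huv hd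
        · exact huv hd.symm
      · rcases hd with hd | hd <;>
          · have := arc_cross hA ((dpath1' A).mp hd)
            tauto
      · rcases hd with hd | hd
        · obtain ⟨w, hw1, hw2⟩ := (dpath2' A).mp hd
          exact no2path hA huv h1 hw1 hw2 hc
        · obtain ⟨w, hw1, hw2⟩ := (dpath2' A).mp hd
          exact no2path hA (Ne.symm huv) hv1 hw1 hw2 hc.symm
      · rcases hd with hd | hd
        · obtain ⟨w, x, hw, hx, hy⟩ := (dpath3' A).mp hd
          have p1 : corPart w := by have := arc_cross hA hw; tauto
          have p2 : ¬ corPart x := by have := arc_cross hA hx; tauto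
          have p3 : corPart v := by have := arc_cross hA hy; tauto
          exact hpv p3
        · obtain ⟨w, x, hw, hx, hy⟩ := (dpath3' A).mp hd
          have p1 : corPart w := by have := arc_cross hA hw; tauto
          have p2 : ¬ corPart x := by have := arc_cross hA hx; tauto
          have p3 : corPart u := by have := arc_cross hA hy; tauto
          exact hpu p3

end Corona

end DPackAux
namespace DPackAux

section Final

variable {n p : ℕ} {A : Vc n p → Vc n p → Prop}

lemma arc_of_adj (hA : IsOrientation (genCorona (pathGraph n) p) A) {u v : Vc n p}
    (h : (genCorona (pathGraph n) p).Adj u v) : wdist A u v ≤ (1 : ℕ) := by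
  rcases (hA.2 u v).mp h with h' | h'
  · exact wdist_le' A (Or.inl ((dpath1' A).mpr h'))
  · exact wdist_le' A (Or.inr ((dpath1' A).mpr h'))

lemma diff_colors (hA : IsOrientation (genCorona (pathGraph n) p) A) {k : ℕ} {c : Vc n p → ℕ}
    (hc : IsDPackingColoring A k c) {u v : Vc n p}
    (h : (genCorona (pathGraph n) p).Adj u v) : c u ≠ c v := by
  intro he
  have hlt := hc.2 u v h.ne he
  have hle := arc_of_adj hA h
  have h1 : 1 ≤ c u := (hc.1 u).1
  have h2 : (c u : ℕ∞) < (1 : ℕ) := lt_of_lt_of_le hlt hle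
  have h3 : c u < 1 := by exact_mod_cast h2
  omega

lemma two_le_mem (hn : 1 ≤ n) (hp : 1 ≤ p)
    (hA : IsOrientation (genCorona (pathGraph n) p) A) {k : ℕ}
    (hk : ∃ c, IsDPackingColoring A k c) : 2 ≤ k := by
  obtain ⟨c, hc⟩ := hk
  have hadj : (genCorona (pathGraph n) p).Adj (Sum.inl (⟨0, hn⟩ : Fin n))
      (Sum.inr ((⟨0, hn⟩ : Fin n), (⟨0, hp⟩ : Fin p))) :=
    Or.inr (Or.inl ⟨_, _, rfl, rfl⟩)
  have hdiff := diff_colors hA hc hadj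
  have h1 := hc.1 (Sum.inl (⟨0, hn⟩ : Fin n))
  have h2 := hc.1 (Sum.inr ((⟨0, hn⟩ : Fin n), (⟨0, hp⟩ : Fin p)))
  omega

lemma part_of_coloring (hA : IsOrientation (genCorona (pathGraph n) p) A) {c : Vc n p → ℕ}
    (hc : IsDPackingColoring A 2 c) :
    ∃ s : Set (Vc n p),
      (∀ u v, (genCorona (pathGraph n) p).Adj u v → (u ∈ s ↔ v ∉ s)) ∧
      ∀ v ∈ s, IsSource A v ∨ IsSink A v := by
  refine ⟨{v | c v = 1}, ?_, ?_⟩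
  · intro u v hadj
    have hdiff := diff_colors hA hc hadj
    have h1 := hc.1 u
    have h2 := hc.1 v
    simp only [Set.mem_setOf_eq]
    omega
  · intro w hw
    simp only [Set.mem_setOf_eq] at hw
    by_contra hcon
    push_neg at hcon
    obtain ⟨hns, hnk⟩ := hcon
    simp only [IsSource, IsSink, not_forall, not_not] at hns hnk
    obtain ⟨u, hu⟩ := hns
    obtain ⟨v, hv⟩ := hnk
    have hune : u ≠ v := fun e => hA.1 u w hu (e ▸ hv)
    have hadju : (genCorona (pathGraph n) p).Adj u w := (hA.2 u w).mpr (Or.inl hu)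
    have hadjv : (genCorona (pathGraph n) p).Adj w v := (hA.2 w v).mpr (Or.inl hv)
    have hcu : c u = 2 := by
      have := diff_colors hA hc hadju
      have h1 := hc.1 u
      omega
    have hcv : c v = 2 := by
      have := diff_colors hA hc hadjv
      have h1 := hc.1 v
      omega
    have hlt := hc.2 u v hune (by omega)
    have hle : wdist A u v ≤ (2 : ℕ) :=
      wdist_le' A (Or.inl ((dpath2' A).mpr ⟨w, hu, hv⟩))
    rw [hcu] at hlt
    have : (2 : ℕ∞) < (2 : ℕ) := lt_of_lt_of_le (by exact_mod_cast hlt) hle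
    simp at this

lemma coloring_of_part (hA : IsOrientation (genCorona (pathGraph n) p) A)
    (s : Set (Vc n p))
    (hs1 : ∀ u v, (genCorona (pathGraph n) p).Adj u v → (u ∈ s ↔ v ∉ s))
    (hs2 : ∀ v ∈ s, IsSource A v ∨ IsSink A v) :
    ∃ c, IsDPackingColoring A 2 c := by
  classical
  refine ⟨fun v => if v ∈ s then 1 else 2, ⟨fun v => by dsimp only; split_ifs <;> omega, ?_⟩⟩
  intro u v huv hc
  by_cases hu : u ∈ s
  · have hv : v ∈ s := by
      by_contra hv
      simp [hu, hv] at hc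
    simp only [if_pos hu]
    apply lt_wdist' A
    intro m hm hd
    interval_cases m
    · rcases hd with hd | hd
      · exact huv hd
      · exact huv hd.symm
    · rcases hd with hd | hd
      · exact (hs1 u v ((hA.2 u v).mpr (Or.inl ((dpath1' A).mp hd)))).mp hu hv
      · exact (hs1 v u ((hA.2 v u).mpr (Or.inl ((dpath1' A).mp hd)))).mp hv hu
  · have hv : v ∉ s := by
      intro hv
      simp [hu, hv] at hc
    simp only [if_neg hu]
    apply lt_wdist' A
    intro m hm hd
    interval_cases m
    · rcases hd with hd | hd
      · exact huv hd
      · exact huv hd.symm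
    · rcases hd with hd | hd
      · exact hu ((hs1 u v ((hA.2 u v).mpr (Or.inl ((dpath1' A).mp hd)))).mpr hv)
      · exact hv ((hs1 v u ((hA.2 v u).mpr (Or.inl ((dpath1' A).mp hd)))).mpr hu)
    · rcases hd with hd | hd <;>
      · obtain ⟨w, hw1, hw2⟩ := (dpath2' A).mp hd
        have hws : w ∈ s := by
          have hadj := (hA.2 _ w).mpr (Or.inl hw1)
          have := hs1 _ w hadj
          tauto
        rcases hs2 w hws with hsrc | hsnk
        · exact hsrc _ hw1
        · exact hsnk _ hw2

end Final

end DPackAux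

open DPackAux in
theorem dpacking_oriented_corona_path (n p : ℕ) (hn : 1 ≤ n) (hp : 1 ≤ p)
    (A : (Fin n ⊕ Fin n × Fin p) → (Fin n ⊕ Fin n × Fin p) → Prop)
    (hA : IsOrientation (genCorona (pathGraph n) p) A) :
    2 ≤ dPackingChromaticNumber A ∧ dPackingChromaticNumber A ≤ 3 ∧
    (dPackingChromaticNumber A = 2 ↔
      ∃ s : Set (Fin n ⊕ Fin n × Fin p),
        (∀ u v, (genCorona (pathGraph n) p).Adj u v → (u ∈ s ↔ v ∉ s)) ∧
        ∀ v ∈ s, IsSource A v ∨ IsSink A v) := by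
  have hS3 : 3 ∈ {k | ∃ c, IsDPackingColoring A k c} := ⟨ccol A, ccol_packing hA⟩
  have hub : dPackingChromaticNumber A ≤ 3 := Nat.sInf_le hS3
  have hmem : dPackingChromaticNumber A ∈ {k | ∃ c, IsDPackingColoring A k c} :=
    Nat.sInf_mem ⟨3, hS3⟩
  have hlb : 2 ≤ dPackingChromaticNumber A := two_le_mem hn hp hA hmem
  refine ⟨hlb, hub, ?_, ?_⟩
  · intro h2
    rw [h2] at hmem
    obtain ⟨c, hc⟩ := hmem
    exact part_of_coloring hA hc
  · rintro ⟨s, hs1, hs2⟩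
    have h2 : 2 ∈ {k | ∃ c, IsDPackingColoring A k c} := coloring_of_part hA s hs1 hs2
    exact le_antisymm (Nat.sInf_le h2) hlb
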